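/- Let Z₀ = λ₁x∂x + λ₂y∂y with λ := λ₁/λ₂ ∈ ℝ₍<0₎ \ ℚ, and let Ŷ ≠ 0 be a formal meromorphic vector field (components in ℂ((x,y)), formal Laurent in x and y) satisfying [Z₀, Ŷ] = δŶ for some δ ∈ ℂ. Then there exist unique (n,m) ∈ ℤ² and (c,d) ∈ ℂ² such that δ = nλ₁ + mλ₂ and Ŷ(x,y) = xⁿyᵐ(dx∂x + cy∂y). -/

import Mathlib

/- Statement 8 (Proposition irrat-form-aff-lie): Z₀ = λ₁x∂x + λ₂y∂y with
λ := λ₁/λ₂ ∈ ℝ_{<0} \ ℚ.  If Ŷ ≠ 0 is a formal meromorphic vector field with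
[Z₀,Ŷ] = δŶ then there are unique (n,m) ∈ ℤ² and (c,d) ∈ ℂ² with δ = nλ₁ + mλ₂ and
Ŷ = xⁿyᵐ(d·x∂x + c·y∂y).
Encoding of meromorphy: the components of Ŷ are D/(x^P y^Q) and C/(x^P y^Q) with
D, C ∈ ℂ[[x,y]]; the bracket relation [Z₀,Ŷ] = δŶ then reads
Z₀·D = (δ + λ₁ + Pλ₁ + Qλ₂)·D and Z₀·C = (δ + λ₂ + Pλ₁ + Qλ₂)·C, and the conclusion
Ŷ = xⁿyᵐ(dx∂x + cy∂y) reads D = d·x^{n+1+P} y^{m+Q}, C = c·x^{n+P} y^{m+1+Q}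
(with ℤ-exponents realized through `Int.toNat`; when the coefficient is 0 both sides
vanish). -/

noncomputable section
open MvPowerSeries

abbrev R2 := MvPowerSeries (Fin 2) ℂ

def pd (i : Fin 2) (f : R2) : R2 :=
  fun d => ((d i : ℂ) + 1) * MvPowerSeries.coeff (R := ℂ) (d + Finsupp.single i 1) f

/-- Z₀·f for Z₀ = λ₁x∂x + λ₂y∂y -/
def Z0D (lam₁ lam₂ : ℂ) (f : R2) : R2 :=
  MvPowerSeries.C (σ := Fin 2) (R := ℂ) lam₁ * MvPowerSeries.X 0 * pd 0 f +
    MvPowerSeries.C (σ := Fin 2) (R := ℂ) lam₂ * MvPowerSeries.X 1 * pd 1 f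

lemma coeff_term (a : ℂ) (i : Fin 2) (f : R2) (d : Fin 2 →₀ ℕ) :
    MvPowerSeries.coeff (R := ℂ) d (MvPowerSeries.C (σ := Fin 2) (R := ℂ) a * MvPowerSeries.X i * pd i f)
      = a * (d i : ℂ) * MvPowerSeries.coeff (R := ℂ) d f := by
  have h : MvPowerSeries.C (σ := Fin 2) (R := ℂ) a * MvPowerSeries.X i
      = monomial (R := ℂ) (Finsupp.single i 1) a := by
    rw [X_def, ← monomial_zero_eq_C_apply, monomial_mul_monomial, mul_one, zero_add]
  rw [h, coeff_monomial_mul]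
  by_cases hle : Finsupp.single i 1 ≤ d
  · rw [if_pos hle]
    have hd : 1 ≤ d i := by
      have := hle i; simpa using this
    have hcoe : MvPowerSeries.coeff (R := ℂ) (d - Finsupp.single i 1) (pd i f)
        = (((d i - 1 : ℕ) : ℂ) + 1) * MvPowerSeries.coeff (R := ℂ) d f := by
      show pd i f (d - Finsupp.single i 1) = _
      unfold pd
      rw [tsub_add_cancel_of_le hle]
      congr 2
      simp [Finsupp.tsub_apply]
    rw [hcoe]
    have : (((d i - 1 : ℕ) : ℂ) + 1) = (d i : ℂ) := by
      push_cast [Nat.cast_sub hd]; ring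
    rw [this]; ring
  · rw [if_neg hle]
    have hdi : d i = 0 := by
      by_contra hcon
      exact hle (by simpa [Finsupp.single_le_iff] using Nat.one_le_iff_ne_zero.mpr hcon)
    rw [hdi]; simp

lemma coeff_Z0D (l₁ l₂ : ℂ) (f : R2) (d : Fin 2 →₀ ℕ) :
    MvPowerSeries.coeff (R := ℂ) d (Z0D l₁ l₂ f)
      = (l₁ * (d 0 : ℂ) + l₂ * (d 1 : ℂ)) * MvPowerSeries.coeff (R := ℂ) d f := by
  unfold Z0D
  rw [map_add, coeff_term, coeff_term]; ring

lemma CXX (w : ℂ) (a b : ℕ) :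
    MvPowerSeries.C (σ := Fin 2) (R := ℂ) w * MvPowerSeries.X 0 ^ a * MvPowerSeries.X 1 ^ b
      = monomial (R := ℂ) (Finsupp.single (0 : Fin 2) a + Finsupp.single (1 : Fin 2) b) w := by
  rw [X_pow_eq, X_pow_eq, ← monomial_zero_eq_C_apply, monomial_mul_monomial,
    monomial_mul_monomial, mul_one, mul_one, zero_add]

lemma fin2_eq (d : Fin 2 →₀ ℕ) :
    d = Finsupp.single (0 : Fin 2) (d 0) + Finsupp.single (1 : Fin 2) (d 1) := by
  ext j; fin_cases j <;> simp

lemma eig_struct (l₁ l₂ : ℂ)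
    (hind : ∀ a b : ℤ, (a : ℂ) * l₁ + (b : ℂ) * l₂ = 0 → a = 0 ∧ b = 0)
    (μ : ℂ) (f : R2)
    (h : ∀ d : Fin 2 →₀ ℕ, (l₁ * (d 0 : ℂ) + l₂ * (d 1 : ℂ)) * MvPowerSeries.coeff (R := ℂ) d f
        = μ * MvPowerSeries.coeff (R := ℂ) d f)
    (hf : f ≠ 0) :
    ∃ d : Fin 2 →₀ ℕ, MvPowerSeries.coeff (R := ℂ) d f ≠ 0 ∧
      μ = l₁ * (d 0 : ℂ) + l₂ * (d 1 : ℂ) ∧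
      f = monomial (R := ℂ) d (MvPowerSeries.coeff (R := ℂ) d f) := by
  have hex : ∃ d : Fin 2 →₀ ℕ, MvPowerSeries.coeff (R := ℂ) d f ≠ 0 := by
    by_contra hcon
    push_neg at hcon
    exact hf (MvPowerSeries.ext fun n => by simp [hcon n])
  obtain ⟨d, hd⟩ := hex
  have hμ : μ = l₁ * (d 0 : ℂ) + l₂ * (d 1 : ℂ) := by
    have := h d
    rw [mul_eq_mul_right_iff] at this
    rcases this with h1 | h1
    · exact h1.symm
    · exact absurd h1 hd
  refine ⟨d, hd, hμ, ?_⟩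
  ext e
  rw [coeff_monomial]
  by_cases he : e = d
  · rw [if_pos he, he]
  · rw [if_neg he]
    by_contra hce
    have hμe : μ = l₁ * (e 0 : ℂ) + l₂ * (e 1 : ℂ) := by
      have := h e
      rw [mul_eq_mul_right_iff] at this
      rcases this with h1 | h1
      · exact h1.symm
      · exact absurd h1 hce
    obtain ⟨h0, h1⟩ := hind ((e 0 : ℤ) - (d 0 : ℤ)) ((e 1 : ℤ) - (d 1 : ℤ))
      (by push_cast; linear_combination hμ - hμe)
    apply he
    ext j
    fin_cases j
    · exact_mod_cast sub_eq_zero.mp h0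
    · exact_mod_cast sub_eq_zero.mp h1

lemma monomial_inj (A : Fin 2 →₀ ℕ) (x y : ℂ) (h : monomial (R := ℂ) A x = monomial (R := ℂ) A y) :
    x = y := by
  have := congrArg (MvPowerSeries.coeff (R := ℂ) A) h
  rwa [coeff_monomial_same, coeff_monomial_same] at this

lemma prop_unique (lam₁ lam₂ : ℂ)
    (hind : ∀ a b : ℤ, (a : ℂ) * lam₁ + (b : ℂ) * lam₂ = 0 → a = 0 ∧ b = 0)
    (δ : ℂ) (P Q : ℕ) (D C : R2) (w y : (ℤ × ℤ) × ℂ × ℂ)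
    (hy : δ = (y.1.1 : ℂ) * lam₁ + (y.1.2 : ℂ) * lam₂ ∧
      D = MvPowerSeries.C (σ := Fin 2) (R := ℂ) y.2.2 *
            MvPowerSeries.X 0 ^ (y.1.1 + 1 + P).toNat *
            MvPowerSeries.X 1 ^ (y.1.2 + Q).toNat ∧
      C = MvPowerSeries.C (σ := Fin 2) (R := ℂ) y.2.1 *
            MvPowerSeries.X 0 ^ (y.1.1 + P).toNat *
            MvPowerSeries.X 1 ^ (y.1.2 + 1 + Q).toNat)
    (hw : δ = (w.1.1 : ℂ) * lam₁ + (w.1.2 : ℂ) * lam₂ ∧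
      D = MvPowerSeries.C (σ := Fin 2) (R := ℂ) w.2.2 *
            MvPowerSeries.X 0 ^ (w.1.1 + 1 + P).toNat *
            MvPowerSeries.X 1 ^ (w.1.2 + Q).toNat ∧
      C = MvPowerSeries.C (σ := Fin 2) (R := ℂ) w.2.1 *
            MvPowerSeries.X 0 ^ (w.1.1 + P).toNat *
            MvPowerSeries.X 1 ^ (w.1.2 + 1 + Q).toNat) :
    y = w := by
  obtain ⟨⟨n, m⟩, c, dd⟩ := w
  obtain ⟨⟨n', m'⟩, c', dd'⟩ := y
  simp only at hy hw
  obtain ⟨hδ', hD', hC'⟩ := hy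
  obtain ⟨hδ, hD, hC⟩ := hw
  obtain ⟨h0, h1⟩ := hind (n' - n) (m' - m) (by push_cast; linear_combination hδ - hδ')
  have hn : n' = n := by omega
  have hm : m' = m := by omega
  subst hn; subst hm
  have hdd : dd' = dd :=
    monomial_inj _ _ _ (by rw [← CXX, ← CXX, ← hD, ← hD'])
  have hcc : c' = c :=
    monomial_inj _ _ _ (by rw [← CXX, ← CXX, ← hC, ← hC'])
  rw [hdd, hcc]

theorem stmt8 (lam₁ lam₂ : ℂ) (hlam₂ : lam₂ ≠ 0)
    -- λ = λ₁/λ₂ ∈ ℝ_{<0} \ ℚ :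
    (hreal : ∃ r : ℝ, lam₁ / lam₂ = (r : ℂ) ∧ r < 0)
    (hirr : ∀ q : ℚ, lam₁ / lam₂ ≠ (q : ℂ))
    (δ : ℂ) (P Q : ℕ) (D C : R2)
    -- Ŷ ≠ 0 :
    (hne : ¬ (D = 0 ∧ C = 0))
    -- [Z₀, Ŷ] = δ·Ŷ, with poles x^P y^Q cleared :
    (hD : Z0D lam₁ lam₂ D = MvPowerSeries.C (σ := Fin 2) (R := ℂ)
      (δ + lam₁ + (P : ℂ) * lam₁ + (Q : ℂ) * lam₂) * D)
    (hC : Z0D lam₁ lam₂ C = MvPowerSeries.C (σ := Fin 2) (R := ℂ)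
      (δ + lam₂ + (P : ℂ) * lam₁ + (Q : ℂ) * lam₂) * C) :
    ∃! w : (ℤ × ℤ) × ℂ × ℂ,
      δ = (w.1.1 : ℂ) * lam₁ + (w.1.2 : ℂ) * lam₂ ∧
      D = MvPowerSeries.C (σ := Fin 2) (R := ℂ) w.2.2 *
            MvPowerSeries.X 0 ^ (w.1.1 + 1 + P).toNat *
            MvPowerSeries.X 1 ^ (w.1.2 + Q).toNat ∧
      C = MvPowerSeries.C (σ := Fin 2) (R := ℂ) w.2.1 *
            MvPowerSeries.X 0 ^ (w.1.1 + P).toNat *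
            MvPowerSeries.X 1 ^ (w.1.2 + 1 + Q).toNat := by
  classical
  have hind : ∀ a b : ℤ, (a : ℂ) * lam₁ + (b : ℂ) * lam₂ = 0 → a = 0 ∧ b = 0 := by
    intro a b hab
    by_cases ha : a = 0
    · subst ha
      refine ⟨rfl, ?_⟩
      simp only [Int.cast_zero, zero_mul, zero_add, mul_eq_zero] at hab
      rcases hab with h | h
      · exact_mod_cast h
      · exact absurd h hlam₂
    · exfalso
      have haC : (a : ℂ) ≠ 0 := Int.cast_ne_zero.mpr ha
      apply hirr (-(b : ℚ) / a)
      push_cast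
      field_simp
      linear_combination hab
  have hD' : ∀ d : Fin 2 →₀ ℕ,
      (lam₁ * (d 0 : ℂ) + lam₂ * (d 1 : ℂ)) * MvPowerSeries.coeff (R := ℂ) d D
        = (δ + lam₁ + (P : ℂ) * lam₁ + (Q : ℂ) * lam₂) * MvPowerSeries.coeff (R := ℂ) d D := by
    intro d
    have := congrArg (MvPowerSeries.coeff (R := ℂ) d) hD
    rwa [coeff_Z0D, coeff_C_mul] at this
  have hC' : ∀ d : Fin 2 →₀ ℕ,
      (lam₁ * (d 0 : ℂ) + lam₂ * (d 1 : ℂ)) * MvPowerSeries.coeff (R := ℂ) d C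
        = (δ + lam₂ + (P : ℂ) * lam₁ + (Q : ℂ) * lam₂) * MvPowerSeries.coeff (R := ℂ) d C := by
    intro d
    have := congrArg (MvPowerSeries.coeff (R := ℂ) d) hC
    rwa [coeff_Z0D, coeff_C_mul] at this
  by_cases hDz : D = 0
  · -- D = 0, so C ≠ 0
    have hCz : C ≠ 0 := fun h => hne ⟨hDz, h⟩
    obtain ⟨e, he0, hμe, hmonoe⟩ := eig_struct lam₁ lam₂ hind _ C hC' hCz
    set c := MvPowerSeries.coeff (R := ℂ) e C with hc
    refine ⟨⟨⟨(e 0 : ℤ) - P, (e 1 : ℤ) - 1 - Q⟩, c, 0⟩, ⟨?_, ?_, ?_⟩, ?_⟩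
    · push_cast
      linear_combination hμe
    · simp [hDz]
    · show C = MvPowerSeries.C (σ := Fin 2) (R := ℂ) c *
        MvPowerSeries.X 0 ^ ((e 0 : ℤ) - P + P).toNat *
        MvPowerSeries.X 1 ^ ((e 1 : ℤ) - 1 - Q + 1 + Q).toNat
      rw [CXX, show ((e 0 : ℤ) - P + P).toNat = e 0 by omega,
        show ((e 1 : ℤ) - 1 - Q + 1 + Q).toNat = e 1 by omega, ← fin2_eq]
      exact hmonoe
    · intro y hy
      refine prop_unique lam₁ lam₂ hind δ P Q D C _ y hy ⟨?_, ?_, ?_⟩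
      · push_cast
        linear_combination hμe
      · simp [hDz]
      · show C = MvPowerSeries.C (σ := Fin 2) (R := ℂ) c *
          MvPowerSeries.X 0 ^ ((e 0 : ℤ) - P + P).toNat *
          MvPowerSeries.X 1 ^ ((e 1 : ℤ) - 1 - Q + 1 + Q).toNat
        rw [CXX, show ((e 0 : ℤ) - P + P).toNat = e 0 by omega,
          show ((e 1 : ℤ) - 1 - Q + 1 + Q).toNat = e 1 by omega, ← fin2_eq]
        exact hmonoe
  · -- D ≠ 0
    obtain ⟨d, hd0, hμ, hmono⟩ := eig_struct lam₁ lam₂ hind _ D hD' hDz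
    set v := MvPowerSeries.coeff (R := ℂ) d D with hv
    have hDgoal : D = MvPowerSeries.C (σ := Fin 2) (R := ℂ) v *
        MvPowerSeries.X 0 ^ ((d 0 : ℤ) - 1 - P + 1 + P).toNat *
        MvPowerSeries.X 1 ^ ((d 1 : ℤ) - Q + Q).toNat := by
      rw [CXX, show ((d 0 : ℤ) - 1 - P + 1 + P).toNat = d 0 by omega,
        show ((d 1 : ℤ) - Q + Q).toNat = d 1 by omega, ← fin2_eq]
      exact hmono
    have hδgoal : δ = (((d 0 : ℤ) - 1 - P : ℤ) : ℂ) * lam₁ +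
        (((d 1 : ℤ) - Q : ℤ) : ℂ) * lam₂ := by
      push_cast
      linear_combination hμ
    by_cases hCz : C = 0
    · refine ⟨⟨⟨(d 0 : ℤ) - 1 - P, (d 1 : ℤ) - Q⟩, 0, v⟩, ⟨hδgoal, hDgoal, by simp [hCz]⟩, ?_⟩
      intro y hy
      exact prop_unique lam₁ lam₂ hind δ P Q D C _ y hy ⟨hδgoal, hDgoal, by simp [hCz]⟩
    · obtain ⟨e, he0, hμe, hmonoe⟩ := eig_struct lam₁ lam₂ hind _ C hC' hCz
      obtain ⟨h0, h1⟩ := hind ((e 0 : ℤ) - (d 0 : ℤ) + 1) ((e 1 : ℤ) - (d 1 : ℤ) - 1)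
        (by push_cast; linear_combination hμ - hμe)
      set c := MvPowerSeries.coeff (R := ℂ) e C with hc
      have hCgoal : C = MvPowerSeries.C (σ := Fin 2) (R := ℂ) c *
          MvPowerSeries.X 0 ^ ((d 0 : ℤ) - 1 - P + P).toNat *
          MvPowerSeries.X 1 ^ ((d 1 : ℤ) - Q + 1 + Q).toNat := by
        rw [CXX, show ((d 0 : ℤ) - 1 - P + P).toNat = e 0 by omega,
          show ((d 1 : ℤ) - Q + 1 + Q).toNat = e 1 by omega, ← fin2_eq]
        exact hmonoe
      refine ⟨⟨⟨(d 0 : ℤ) - 1 - P, (d 1 : ℤ) - Q⟩, c, v⟩, ⟨hδgoal, hDgoal, hCgoal⟩, ?_⟩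
      intro y hy
      exact prop_unique lam₁ lam₂ hind δ P Q D C _ y hy ⟨hδgoal, hDgoal, hCgoal⟩
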